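/- Let f, g be holomorphic on the upper half-plane, and for integers k, ℓ > 0 define the Cohen–Kuznetsov series Φ_{f,k}(τ,X) = Σ_{n≥0} D^n f(τ)·X^n/(n!·(k)_n). Then the formal power series identity Σ_{n≥0} [f,g]_n^{(k,ℓ)}(τ)·X^n/((k)_n·(ℓ)_n) = Φ_{f,k}(τ,-X)·Φ_{g,ℓ}(τ,X) holds, where [f,g]_n^{(k,ℓ)} = Σ_{i=0}^n (-1)^i·C(n+k-1,n-i)·C(n+ℓ-1,i)·D^i(f)·D^{n-i}(g) is the n-th Rankin–Cohen bracket. -/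

import Mathlib

open Complex Finset

noncomputable section

/-- The normalized derivative `D = (2πi)⁻¹ d/dτ`. -/
def Dop (f : ℂ → ℂ) : ℂ → ℂ := fun τ => (2 * ↑Real.pi * I)⁻¹ * deriv f τ

/-- Rising factorial `x (x+1) ⋯ (x+n-1)` for complex `x`. -/
def risingC (x : ℂ) (n : ℕ) : ℂ := ∏ i ∈ Finset.range n, (x + i)

/-- The `n`-th Rankin–Cohen bracket
`[f,g]_n^{(k,ℓ)} = Σ_{i=0}^n (-1)^i·C(n+k-1,n-i)·C(n+ℓ-1,i)·D^i(f)·D^{n-i}(g)`. -/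
def RCbracket (f g : ℂ → ℂ) (k l n : ℕ) (τ : ℂ) : ℂ :=
  ∑ i ∈ Finset.range (n + 1),
    (-1 : ℂ) ^ i * ((n + k - 1).choose (n - i) : ℂ) * ((n + l - 1).choose i : ℂ) *
      Dop^[i] f τ * Dop^[n - i] g τ

lemma risingC_natCast (k n : ℕ) : risingC (k : ℂ) n = (k.ascFactorial n : ℂ) := by
  induction n with
  | zero => simp [risingC]
  | succ n ih =>
    rw [risingC, Finset.prod_range_succ, ← risingC, ih, Nat.ascFactorial_succ]
    push_cast
    ring

lemma risingC_add (x : ℂ) (a b : ℕ) :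
    risingC x (a + b) = risingC x a * risingC (x + a) b := by
  rw [risingC, Finset.prod_range_add, ← risingC]
  congr 1
  refine Finset.prod_congr rfl fun i _ => ?_
  push_cast
  ring

lemma risingC_ne_zero {k : ℕ} (hk : 0 < k) (n : ℕ) : risingC (k : ℂ) n ≠ 0 := by
  rw [risingC_natCast]
  exact_mod_cast (Nat.pos_of_ne_zero (by
    obtain ⟨m, rfl⟩ := Nat.exists_eq_add_of_lt hk
    simp only [Nat.zero_add]
    exact (Nat.ascFactorial_pos m n).ne')).ne'

lemma key1 {k n i : ℕ} (hk : 0 < k) (hi : i ≤ n) :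
    risingC (k : ℂ) n
      = ((n + k - 1).choose (n - i) : ℂ) * ((n - i).factorial : ℂ) * risingC (k : ℂ) i := by
  have hn : n = i + (n - i) := (Nat.add_sub_cancel' hi).symm
  have h3 : risingC ((k : ℂ) + i) (n - i)
      = ((n - i).factorial : ℂ) * ((n + k - 1).choose (n - i) : ℂ) := by
    have h1 : ((k : ℂ) + i) = ((k + i : ℕ) : ℂ) := by push_cast; ring
    have h2 : k + i + (n - i) - 1 = n + k - 1 := by omega
    rw [h1, risingC_natCast, Nat.ascFactorial_eq_factorial_mul_choose', h2]
    push_cast; ring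
  calc risingC (k : ℂ) n = risingC (k : ℂ) (i + (n - i)) := by rw [← hn]
    _ = risingC (k : ℂ) i * risingC ((k : ℂ) + i) (n - i) := risingC_add _ _ _
    _ = _ := by rw [h3]; ring

lemma key2 {l n i : ℕ} (hl : 0 < l) (hi : i ≤ n) :
    risingC (l : ℂ) n
      = ((n + l - 1).choose i : ℂ) * (i.factorial : ℂ) * risingC (l : ℂ) (n - i) := by
  have hn : n = (n - i) + i := (Nat.sub_add_cancel hi).symm
  have h3 : risingC ((l : ℂ) + (n - i : ℕ)) i
      = (i.factorial : ℂ) * ((n + l - 1).choose i : ℂ) := by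
    have h1 : ((l : ℂ) + (n - i : ℕ)) = ((l + (n - i) : ℕ) : ℂ) := by push_cast; ring
    have h2 : l + (n - i) + i - 1 = n + l - 1 := by omega
    rw [h1, risingC_natCast, Nat.ascFactorial_eq_factorial_mul_choose', h2]
    push_cast; ring
  calc risingC (l : ℂ) n = risingC (l : ℂ) ((n - i) + i) := by rw [← hn]
    _ = risingC (l : ℂ) (n - i) * risingC ((l : ℂ) + (n - i : ℕ)) i := risingC_add _ _ _
    _ = _ := by rw [h3]; ring

/-- For holomorphic `f, g` and `k, ℓ > 0`, the formal power series identity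
`Σ_{n≥0} [f,g]_n^{(k,ℓ)}(τ)·Xⁿ/((k)_n (ℓ)_n) = Φ_{f,k}(τ,-X)·Φ_{g,ℓ}(τ,X)`, where
`Φ_{f,k}(τ,X) = Σ_{n≥0} Dⁿf(τ)·Xⁿ/(n!·(k)_n)` is the Cohen–Kuznetsov series. -/
theorem statement12 (f g : ℂ → ℂ)
    (hf : DifferentiableOn ℂ f {z : ℂ | 0 < z.im})
    (hg : DifferentiableOn ℂ g {z : ℂ | 0 < z.im})
    (k l : ℕ) (hk : 0 < k) (hl : 0 < l) (τ : ℂ) :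
    (PowerSeries.mk fun n => RCbracket f g k l n τ / (risingC (k : ℂ) n * risingC (l : ℂ) n))
      = (PowerSeries.mk fun n =>
          (-1 : ℂ) ^ n * Dop^[n] f τ / ((n.factorial : ℂ) * risingC (k : ℂ) n)) *
        (PowerSeries.mk fun n =>
          Dop^[n] g τ / ((n.factorial : ℂ) * risingC (l : ℂ) n)) := by
  ext n
  rw [PowerSeries.coeff_mul, Finset.Nat.sum_antidiagonal_eq_sum_range_succ_mk]
  simp only [PowerSeries.coeff_mk, RCbracket, Finset.sum_div]
  refine Finset.sum_congr rfl fun i hi => ?_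
  have hi' : i ≤ n := Nat.lt_succ_iff.mp (Finset.mem_range.mp hi)
  rw [key1 hk hi', key2 hl hi']
  have hc1 : ((n + k - 1).choose (n - i) : ℂ) ≠ 0 := by
    exact_mod_cast (Nat.choose_pos (by omega)).ne'
  have hc2 : ((n + l - 1).choose i : ℂ) ≠ 0 := by
    exact_mod_cast (Nat.choose_pos (by omega)).ne'
  have hf1 : ((n - i).factorial : ℂ) ≠ 0 := by exact_mod_cast (Nat.factorial_pos _).ne'
  have hf2 : (i.factorial : ℂ) ≠ 0 := by exact_mod_cast (Nat.factorial_pos _).ne'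
  have hr1 := risingC_ne_zero hk i
  have hr2 := risingC_ne_zero hl (n - i)
  field_simp
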